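/- Let R > 0 and σ > 0. The first eigenvalue λ₁ of the problem u'' + λu = 0 on [0,R] with u'(0) = σu(0), u'(R) = 0, equals c₁²/R², where c₁ is the smallest positive zero of x·tan(x) − Rσ. Consequently λ₁ > π²σ/(π²R + 4R²σ). -/

import Mathlib

open Real Set Filter
open scoped Topology


private lemma hd_trig (a b s x : ℝ) :
    HasDerivAt (fun t => a * Real.cos (s*t) + b * Real.sin (s*t))
      ((b*s) * Real.cos (s*x) + (-(a*s)) * Real.sin (s*x)) x := by
  have h1 : HasDerivAt (fun t : ℝ => s * t) s x := by
    simpa using (hasDerivAt_id x).const_mul s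
  have hc := ((Real.hasDerivAt_cos (s*x)).comp x h1).const_mul a
  have hs := ((Real.hasDerivAt_sin (s*x)).comp x h1).const_mul b
  refine (hc.add hs).congr_deriv ?_
  ring

private lemma deriv_trig (a b s : ℝ) :
    deriv (fun t => a * Real.cos (s*t) + b * Real.sin (s*t))
      = fun t => (b*s) * Real.cos (s*t) + (-(a*s)) * Real.sin (s*t) :=
  funext fun x => (hd_trig a b s x).deriv

private lemma hd_hyp (a b s x : ℝ) :
    HasDerivAt (fun t => a * Real.cosh (s*t) + b * Real.sinh (s*t))
      ((b*s) * Real.cosh (s*x) + (a*s) * Real.sinh (s*x)) x := by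
  have h1 : HasDerivAt (fun t : ℝ => s * t) s x := by
    simpa using (hasDerivAt_id x).const_mul s
  have hc := ((Real.hasDerivAt_cosh (s*x)).comp x h1).const_mul a
  have hs := ((Real.hasDerivAt_sinh (s*x)).comp x h1).const_mul b
  refine (hc.add hs).congr_deriv ?_
  ring

private lemma deriv_hyp (a b s : ℝ) :
    deriv (fun t => a * Real.cosh (s*t) + b * Real.sinh (s*t))
      = fun t => (b*s) * Real.cosh (s*t) + (a*s) * Real.sinh (s*t) :=
  funext fun x => (hd_hyp a b s x).deriv

private lemma hd_affine (a b x : ℝ) :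
    HasDerivAt (fun t => a + b * t) b x := by
  simpa using ((hasDerivAt_id x).const_mul b).const_add a

private lemma deriv_affine (a b : ℝ) :
    deriv (fun t => a + b * t) = fun _ => b :=
  funext fun x => (hd_affine a b x).deriv

private lemma cd_trig (a b s : ℝ) : ContDiff ℝ 2 (fun t => a * Real.cos (s*t) + b * Real.sin (s*t)) :=
  (contDiff_const.mul ((Real.contDiff_cos.of_le le_top).comp (contDiff_const.mul contDiff_id))).add
    (contDiff_const.mul ((Real.contDiff_sin.of_le le_top).comp (contDiff_const.mul contDiff_id)))

private lemma cd_hyp (a b s : ℝ) : ContDiff ℝ 2 (fun t => a * Real.cosh (s*t) + b * Real.sinh (s*t)) :=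
  (contDiff_const.mul ((Real.contDiff_cosh.of_le le_top).comp (contDiff_const.mul contDiff_id))).add
    (contDiff_const.mul ((Real.contDiff_sinh.of_le le_top).comp (contDiff_const.mul contDiff_id)))

private lemma cd_affine (a b : ℝ) : ContDiff ℝ 2 (fun t : ℝ => a + b * t) := by
  fun_prop


private lemma ode_unique {c R : ℝ} (hR : 0 ≤ R) {u v : ℝ → ℝ}
    (hu : ContDiff ℝ 2 u) (hv : ContDiff ℝ 2 v)
    (hude : ∀ x ∈ Set.Icc (0:ℝ) R, deriv (deriv u) x = c * u x)
    (hvde : ∀ x, deriv (deriv v) x = c * v x)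
    (h0 : u 0 = v 0) (h1 : deriv u 0 = deriv v 0) :
    ∀ x ∈ Set.Icc (0:ℝ) R, u x = v x ∧ deriv u x = deriv v x := by
  have hdu : Differentiable ℝ u := hu.differentiable (by norm_num)
  have hdv : Differentiable ℝ v := hv.differentiable (by norm_num)
  have hdu1 : Differentiable ℝ (deriv u) := by
    have := (contDiff_succ_iff_deriv.mp (show ContDiff ℝ (1+1) u by norm_num; exact hu)).2.2
    exact this.differentiable (by norm_num)
  have hdv1 : Differentiable ℝ (deriv v) := by
    have := (contDiff_succ_iff_deriv.mp (show ContDiff ℝ (1+1) v by norm_num; exact hv)).2.2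
    exact this.differentiable (by norm_num)
  set w : ℝ → ℝ := fun x => u x - v x with hw_def
  set w1 : ℝ → ℝ := fun x => deriv u x - deriv v x with hw1_def
  set E : ℝ → ℝ := fun x => (w x)^2 + (w1 x)^2 with hE_def
  have hwd : ∀ x, HasDerivAt w (w1 x) x := fun x =>
    ((hdu x).hasDerivAt).sub ((hdv x).hasDerivAt)
  have hw1d : ∀ x ∈ Set.Icc (0:ℝ) R, HasDerivAt w1 (c * w x) x := by
    intro x hx
    have h := ((hdu1 x).hasDerivAt).sub ((hdv1 x).hasDerivAt)
    have : deriv (deriv u) x - deriv (deriv v) x = c * w x := by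
      rw [hude x hx, hvde x]; simp [hw_def]; ring
    rwa [this] at h
  have hEd : ∀ x ∈ Set.Icc (0:ℝ) R,
      HasDerivAt E (2*(1+c) * (w x * w1 x)) x := by
    intro x hx
    have h := ((hwd x).pow 2).add ((hw1d x hx).pow 2)
    refine h.congr_deriv ?_
    push_cast
    ring
  have hEcont : ContinuousOn E (Set.Icc 0 R) :=
    (((hdu.continuous.sub hdv.continuous).pow 2).add
      ((hdu1.continuous.sub hdv1.continuous).pow 2)).continuousOn
  have key : ∀ x ∈ Set.Icc (0:ℝ) R, ‖E x‖ ≤ gronwallBound 0 (|1+c|) 0 (x - 0) := by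
    apply norm_le_gronwallBound_of_norm_deriv_right_le hEcont
      (f' := fun x => 2*(1+c) * (w x * w1 x))
    · intro x hx
      exact (hEd x ⟨hx.1, hx.2.le⟩).hasDerivWithinAt
    · simp [hE_def, hw_def, hw1_def, h0, h1]
    · intro x hx
      have h1' : |2 * (w x * w1 x)| ≤ (w x)^2 + (w1 x)^2 := by
        rw [abs_le]; constructor <;> nlinarith [sq_nonneg (w x + w1 x), sq_nonneg (w x - w1 x)]
      have hEnn : (0:ℝ) ≤ E x := by positivity
      calc ‖2*(1+c) * (w x * w1 x)‖ = |1+c| * |2 * (w x * w1 x)| := by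
            rw [Real.norm_eq_abs]; rw [show 2*(1+c) * (w x * w1 x) = (1+c) * (2 * (w x * w1 x)) by ring,
              abs_mul]
        _ ≤ |1+c| * E x := by
            apply mul_le_mul_of_nonneg_left _ (abs_nonneg _)
            simpa [hE_def] using h1'
        _ = |1+c| * ‖E x‖ + 0 := by rw [Real.norm_eq_abs, abs_of_nonneg hEnn]; ring
  intro x hx
  have hEx := key x hx
  rw [gronwallBound_ε0_δ0, Real.norm_eq_abs] at hEx
  have hw0 : w x = 0 ∧ w1 x = 0 := by
    have h1' : (w x)^2 + (w1 x)^2 ≤ 0 := by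
      have := abs_nonneg (E x)
      have : E x ≤ 0 := by
        rcases abs_le.mp hEx with ⟨_, h⟩; exact h
      simpa [hE_def] using this
    constructor <;> nlinarith [sq_nonneg (w x), sq_nonneg (w1 x)]
  exact ⟨sub_eq_zero.mp hw0.1, sub_eq_zero.mp hw0.2⟩


private lemma q_anti : StrictAntiOn (fun t => t * Real.cos t / Real.sin t) (Set.Ioc 0 (π/2)) := by
  have hpi := Real.pi_pos
  apply strictAntiOn_of_deriv_neg (convex_Ioc 0 (π/2))
  · intro t ht
    have hsin : Real.sin t ≠ 0 :=
      ne_of_gt (Real.sin_pos_of_pos_of_lt_pi ht.1 (by linarith [ht.2]))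
    exact ((continuousAt_id.mul Real.continuous_cos.continuousAt).div
      Real.continuous_sin.continuousAt hsin).continuousWithinAt
  · rw [interior_Ioc]
    intro t ht
    have hsin : 0 < Real.sin t :=
      Real.sin_pos_of_pos_of_lt_pi ht.1 (by linarith [ht.2])
    have hd : HasDerivAt (fun t => t * Real.cos t / Real.sin t)
        (((1 * Real.cos t + t * -Real.sin t) * Real.sin t - t * Real.cos t * Real.cos t) / Real.sin t ^ 2) t := by
      exact (((hasDerivAt_id t).mul (Real.hasDerivAt_cos t)).div
        (Real.hasDerivAt_sin t) (ne_of_gt hsin)).congr_deriv (by simp)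
    rw [hd.deriv]
    apply div_neg_of_neg_of_pos
    · have h2t : Real.sin (2*t) < 2*t := Real.sin_lt (by linarith [ht.1])
      rw [Real.sin_two_mul] at h2t
      have h6 : t * (Real.sin t^2 + Real.cos t^2) = t := by
        rw [Real.sin_sq_add_cos_sq]; ring
      nlinarith [h6, h2t]
    · positivity

private lemma becker_stark {x : ℝ} (h0 : 0 < x) (h2 : x < π/2) :
    (π^2 - 4*x^2) * Real.sin x < π^2 * x * Real.cos x := by
  have hpi := Real.pi_pos
  have hpi8 : 8 < π^2 := by nlinarith [Real.pi_gt_three]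
  set g : ℝ → ℝ := fun t => π^2 * t * Real.cos t - (π^2 - 4*t^2) * Real.sin t with hg_def
  have hgd : ∀ t : ℝ, HasDerivAt g (t * (4*t*Real.cos t - (π^2-8)*Real.sin t)) t := by
    intro t
    have h1 : HasDerivAt (fun t : ℝ => π^2 * t) (π^2) t := by
      simpa using (hasDerivAt_id t).const_mul (π^2)
    have h3 : HasDerivAt (fun t : ℝ => π^2 - 4*t^2) (-(4*(2*t))) t := by
      have : HasDerivAt (fun t : ℝ => 4*t^2) (4*(2*t)) t := by
        simpa using (hasDerivAt_pow 2 t).const_mul 4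
      simpa using this.const_sub (π^2)
    have h4 := (h1.mul (Real.hasDerivAt_cos t)).sub (h3.mul (Real.hasDerivAt_sin t))
    refine h4.congr_deriv ?_
    ring
  have hgc : Continuous g := by continuity
  have hsinx : 0 < Real.sin x := Real.sin_pos_of_pos_of_lt_pi h0 (by linarith)
  have hg0 : g 0 = 0 := by simp [hg_def]
  have hgpi2 : g (π/2) = 0 := by
    simp [hg_def, Real.cos_pi_div_two, Real.sin_pi_div_two]
    ring
  -- q facts
  have hq : ∀ t1 t2, 0 < t1 → t1 < t2 → t2 ≤ π/2 →
      t2 * Real.cos t2 / Real.sin t2 < t1 * Real.cos t1 / Real.sin t1 := by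
    intro t1 t2 h1 h12 h2'
    exact q_anti ⟨h1, by linarith⟩ ⟨by linarith, h2'⟩ h12
  have main : 0 < g x := by
    rcases le_or_gt 0 (4*x*Real.cos x - (π^2-8)*Real.sin x) with hcase | hcase
    · -- h x ≥ 0 : g strictly increasing on [0, x]
      have hmono : StrictMonoOn g (Set.Icc 0 x) := by
        apply strictMonoOn_of_deriv_pos (convex_Icc 0 x) hgc.continuousOn
        rw [interior_Icc]
        intro t ht
        rw [(hgd t).deriv]
        apply mul_pos ht.1
        have hsint : 0 < Real.sin t := Real.sin_pos_of_pos_of_lt_pi ht.1 (by linarith [ht.2])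
        have hqtx := hq t x ht.1 ht.2 h2.le
        have hqx : (π^2-8)/4 ≤ x * Real.cos x / Real.sin x := by
          rw [le_div_iff₀ hsinx]; linarith
        have : (π^2-8)/4 < t * Real.cos t / Real.sin t := lt_of_le_of_lt hqx hqtx
        rw [div_lt_div_iff₀ (by norm_num) hsint] at this
        linarith
      have := hmono (Set.left_mem_Icc.mpr h0.le) ⟨h0.le, le_refl x⟩ h0
      rwa [hg0] at this
    · -- h x < 0 : g strictly decreasing on [x, π/2]
      have hanti : StrictAntiOn g (Set.Icc x (π/2)) := by
        apply strictAntiOn_of_deriv_neg (convex_Icc x (π/2)) hgc.continuousOn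
        rw [interior_Icc]
        intro t ht
        rw [(hgd t).deriv]
        apply mul_neg_of_pos_of_neg (by linarith [ht.1])
        have hsint : 0 < Real.sin t :=
          Real.sin_pos_of_pos_of_lt_pi (by linarith [ht.1]) (by linarith [ht.2])
        have hqxt := hq x t h0 ht.1 ht.2.le
        have hqx : x * Real.cos x / Real.sin x < (π^2-8)/4 := by
          rw [div_lt_iff₀ hsinx]; linarith
        have : t * Real.cos t / Real.sin t < (π^2-8)/4 := lt_trans hqxt hqx
        rw [div_lt_div_iff₀ hsint (by norm_num)] at this
        linarith
      have := hanti ⟨le_refl x, h2.le⟩ ⟨h2.le, le_refl _⟩ h2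
      rwa [hgpi2] at this
  simp only [hg_def] at main
  linarith

/-- For R > 0, σ > 0, the first eigenvalue λ₁ of u'' + λu = 0 on [0,R] with
u'(0) = σu(0), u'(R) = 0 equals c₁²/R², where c₁ is the smallest positive zero
of x tan x − Rσ; consequently λ₁ > π²σ/(π²R + 4R²σ). -/
theorem stmt13 (R σ lam₁ c₁ : ℝ) (hR : 0 < R) (hσ : 0 < σ)
    (hlam : IsLeast {lam : ℝ | ∃ u : ℝ → ℝ, ContDiff ℝ 2 u ∧
      (∃ x ∈ Set.Icc (0 : ℝ) R, u x ≠ 0) ∧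
      (∀ x ∈ Set.Icc (0 : ℝ) R, deriv (deriv u) x + lam * u x = 0) ∧
      deriv u 0 = σ * u 0 ∧ deriv u R = 0} lam₁)
    (hc : IsLeast {x : ℝ | 0 < x ∧ x * Real.tan x - R * σ = 0} c₁) :
    lam₁ = c₁ ^ 2 / R ^ 2 ∧
      lam₁ > Real.pi ^ 2 * σ / (Real.pi ^ 2 * R + 4 * R ^ 2 * σ) := by
  have hpi := Real.pi_pos
  obtain ⟨⟨hc₁pos, hc₁eq⟩, hcmin⟩ := hc
  have hc₁eq' : c₁ * Real.tan c₁ = R * σ := by linarith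
  -- Step A : c₁ < π/2
  have hA : c₁ < π/2 := by
    have he1 : ∀ᶠ a in 𝓝[<] (π/2), R*σ < Real.tan a :=
      Real.tendsto_tan_pi_div_two.eventually_gt_atTop _
    have he2 : ∀ᶠ a in 𝓝[<] (π/2), (1:ℝ) < a := by
      have h15 : (1:ℝ) < π/2 := by nlinarith [Real.pi_gt_three]
      exact eventually_nhdsWithin_of_eventually_nhds (eventually_gt_nhds h15)
    have he3 : ∀ᶠ a in 𝓝[<] (π/2), a < π/2 := eventually_mem_nhdsWithin
    obtain ⟨a, ha1, ha2, ha3⟩ := (he1.and (he2.and he3)).exists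
    have ha0 : 0 < a := by linarith
    have htanpos : 0 < Real.tan a := lt_trans (by positivity) ha1
    have hRσa : R * σ < a * Real.tan a := by nlinarith [mul_pos (sub_pos.mpr ha2) htanpos]
    have hcont : ContinuousOn (fun x => x * Real.tan x) (Set.Icc 0 a) := by
      intro t ht
      have hcos : Real.cos t ≠ 0 := by
        apply ne_of_gt
        apply Real.cos_pos_of_mem_Ioo
        constructor
        · linarith [ht.1]
        · linarith [ht.2, ha3]
      exact (continuousAt_id.mul (Real.continuousAt_tan.mpr hcos)).continuousWithinAt
    have hIVT := intermediate_value_Icc ha0.le hcont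
    have hmem : R * σ ∈ Set.Icc ((fun x => x * Real.tan x) 0) ((fun x => x * Real.tan x) a) := by
      constructor
      · simp; positivity
      · simpa using hRσa.le
    obtain ⟨x₁, hx₁mem, hx₁⟩ := hIVT hmem
    simp only at hx₁
    have hx₁pos : 0 < x₁ := by
      rcases eq_or_lt_of_le hx₁mem.1 with h | h
      · exfalso; rw [← h] at hx₁; simp at hx₁
        rcases hx₁ with h1 | h1 <;> linarith
      · exact h
    have := hcmin ⟨hx₁pos, by rw [hx₁]; ring⟩
    linarith [hx₁mem.2, ha3]
  have hcos₁ : 0 < Real.cos c₁ := Real.cos_pos_of_mem_Ioo ⟨by linarith, hA⟩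
  have hsin₁ : 0 < Real.sin c₁ := Real.sin_pos_of_pos_of_lt_pi hc₁pos (by linarith)
  have hkey : c₁ * Real.sin c₁ = R * σ * Real.cos c₁ := by
    rw [Real.tan_eq_sin_div_cos] at hc₁eq'
    field_simp at hc₁eq'
    linarith
  -- Step B : c₁²/R² is an eigenvalue
  set s₀ : ℝ := c₁ / R with hs₀_def
  have hs₀ : 0 < s₀ := div_pos hc₁pos hR
  have hs₀sq : c₁^2 / R^2 = s₀^2 := by rw [hs₀_def, div_pow]
  have hs₀R : s₀ * R = c₁ := div_mul_cancel₀ _ (ne_of_gt hR)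
  have hB : (c₁^2/R^2) ∈ {lam : ℝ | ∃ u : ℝ → ℝ, ContDiff ℝ 2 u ∧
      (∃ x ∈ Set.Icc (0 : ℝ) R, u x ≠ 0) ∧
      (∀ x ∈ Set.Icc (0 : ℝ) R, deriv (deriv u) x + lam * u x = 0) ∧
      deriv u 0 = σ * u 0 ∧ deriv u R = 0} := by
    refine ⟨fun t => 1 * Real.cos (s₀*t) + (σ/s₀) * Real.sin (s₀*t), cd_trig 1 (σ/s₀) s₀,
      ⟨0, ⟨le_refl 0, hR.le⟩, by norm_num⟩, ?_, ?_, ?_⟩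
    · intro x _
      rw [deriv_trig, deriv_trig]
      simp only
      rw [hs₀sq]
      field_simp
      ring
    · have hs₀ne : s₀ ≠ 0 := ne_of_gt hs₀
      rw [deriv_trig]
      simp
      field_simp
    · have hs₀ne : s₀ ≠ 0 := ne_of_gt hs₀
      rw [deriv_trig]
      simp only [hs₀R]
      have : σ/s₀ * s₀ = σ := div_mul_cancel₀ σ hs₀ne
      rw [this]
      have hss : s₀ * Real.sin c₁ = σ * Real.cos c₁ := by
        rw [hs₀_def]
        rw [div_mul_eq_mul_div, div_eq_iff (ne_of_gt hR)]
        linarith [hkey]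
      linarith [hss]
  have hle1 : lam₁ ≤ c₁^2/R^2 := hlam.2 hB
  -- Step C : lam₁ ≥ c₁²/R²
  obtain ⟨⟨u, hu2, ⟨x₀, hx₀, hx₀ne⟩, hode, hbc0, hbcR⟩, _⟩ := hlam
  have hude : ∀ x ∈ Set.Icc (0:ℝ) R, deriv (deriv u) x = (-lam₁) * u x := by
    intro x hx; have := hode x hx; linarith [this]; 
  have hge1 : c₁^2/R^2 ≤ lam₁ := by
    rcases lt_trichotomy lam₁ 0 with hneg | hzero | hpos
    · exfalso
      set μ : ℝ := Real.sqrt (-lam₁) with hμ_def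
      have hμ : 0 < μ := Real.sqrt_pos.mpr (by linarith)
      have hμsq : μ^2 = -lam₁ := Real.sq_sqrt (by linarith)
      set a := u 0 with ha_def
      set b := deriv u 0 / μ with hb_def
      have hvde : ∀ x, deriv (deriv (fun t => a * Real.cosh (μ*t) + b * Real.sinh (μ*t))) x
          = (-lam₁) * (a * Real.cosh (μ*x) + b * Real.sinh (μ*x)) := by
        intro x
        rw [deriv_hyp, deriv_hyp]
        simp only
        rw [← hμsq]
        ring
      have huniq := ode_unique hR.le hu2 (cd_hyp a b μ) hude hvde
        (by simp [ha_def]) (by rw [deriv_hyp]; simp [hb_def]; field_simp) 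
      have hend := (huniq R ⟨hR.le, le_refl R⟩).2
      rw [hbcR, deriv_hyp] at hend
      simp only at hend
      have hbσ : b = σ * a / μ := by rw [hb_def, hbc0]
      have hcosh : 0 < Real.cosh (μ*R) := Real.cosh_pos _
      have hsinh : 0 < Real.sinh (μ*R) := Real.sinh_pos_iff.mpr (by positivity)
      have ha0 : a = 0 := by
        rw [hbσ] at hend
        have hμμ : σ * a / μ * μ = σ * a := by field_simp
        rw [hμμ] at hend
        have hfac : 0 < σ * Real.cosh (μ*R) + μ * Real.sinh (μ*R) :=
          add_pos (mul_pos hσ hcosh) (mul_pos hμ hsinh)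
        have h' : a * (σ * Real.cosh (μ*R) + μ * Real.sinh (μ*R)) = 0 := by
          linear_combination - hend
        rcases mul_eq_zero.mp h' with h | h
        · exact h
        · exact absurd h (ne_of_gt hfac)
      have hb0 : b = 0 := by rw [hbσ, ha0]; simp
      have := (huniq x₀ hx₀).1
      rw [ha0, hb0] at this
      simp at this
      exact hx₀ne this
    · exfalso
      set a := u 0 with ha_def
      have hvde : ∀ x, deriv (deriv (fun t : ℝ => a + (σ*a) * t)) x
          = (-lam₁) * (a + (σ*a) * x) := by
        intro x
        rw [deriv_affine, hzero]
        simp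
      have huniq := ode_unique hR.le hu2 (cd_affine a (σ*a)) hude hvde
        (by simp [ha_def]) (by rw [deriv_affine, hbc0])
      have hend := (huniq R ⟨hR.le, le_refl R⟩).2
      rw [hbcR, deriv_affine] at hend
      have ha0 : a = 0 := by
        rcases mul_eq_zero.mp hend.symm with h | h
        · exact absurd h (ne_of_gt hσ)
        · exact h
      have := (huniq x₀ hx₀).1
      rw [ha0] at this
      simp at this
      exact hx₀ne this
    · set s : ℝ := Real.sqrt lam₁ with hs_def
      have hs : 0 < s := Real.sqrt_pos.mpr hpos
      have hssq : s^2 = lam₁ := Real.sq_sqrt hpos.le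
      set a := u 0 with ha_def
      set b := σ * a / s with hb_def
      have hvde : ∀ x, deriv (deriv (fun t => a * Real.cos (s*t) + b * Real.sin (s*t))) x
          = (-lam₁) * (a * Real.cos (s*x) + b * Real.sin (s*x)) := by
        intro x
        rw [deriv_trig, deriv_trig]
        simp only
        rw [← hssq]
        ring
      have huniq := ode_unique hR.le hu2 (cd_trig a b s) hude hvde
        (by simp [ha_def]) (by rw [deriv_trig, hbc0]; simp [hb_def]; field_simp)
      have hend := (huniq R ⟨hR.le, le_refl R⟩).2
      rw [hbcR, deriv_trig] at hend
      simp only at hend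
      have ha0 : a ≠ 0 := by
        intro h
        have hb0 : b = 0 := by rw [hb_def, h]; simp
        have := (huniq x₀ hx₀).1
        rw [h, hb0] at this
        simp at this
        exact hx₀ne this
      -- hend : 0 = b*s*cos(sR) - a*s*sin(sR), b = σa/s
      have heq : s * Real.sin (s*R) = σ * Real.cos (s*R) := by
        have hbs : b * s = σ * a := by rw [hb_def]; field_simp
        rw [hbs] at hend
        have h' : a * (σ * Real.cos (s*R) - s * Real.sin (s*R)) = 0 := by
          linear_combination - hend
        rcases mul_eq_zero.mp h' with h | h
        · exact absurd h ha0
        · linarith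
      have hcosne : Real.cos (s*R) ≠ 0 := by
        intro h
        rw [h] at heq
        simp at heq
        rcases heq with h1 | h1
        · exact absurd h1 (ne_of_gt hs)
        · have := Real.sin_sq_add_cos_sq (s*R)
          rw [h, h1] at this
          norm_num at this
      have hmem : s*R ∈ {x : ℝ | 0 < x ∧ x * Real.tan x - R * σ = 0} := by
        constructor
        · positivity
        · rw [Real.tan_eq_sin_div_cos]
          field_simp
          linear_combination R * heq
      have hle := hcmin hmem
      have h2 : c₁^2 ≤ (s*R)^2 := by
        apply pow_le_pow_left₀ hc₁pos.le hle
      rw [div_le_iff₀ (by positivity)]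
      calc c₁^2 ≤ (s*R)^2 := h2
        _ = lam₁ * R^2 := by rw [mul_pow, hssq]
  have hlamval : lam₁ = c₁^2/R^2 := le_antisymm hle1 hge1
  refine ⟨hlamval, ?_⟩
  -- Step D : the bound, via Becker–Stark
  have hbs := becker_stark hc₁pos hA
  have hfin : R * σ * (π^2 - 4*c₁^2) < π^2 * c₁^2 := by
    have h1 : (π^2 - 4*c₁^2) * (c₁ * Real.sin c₁) < π^2 * c₁ * Real.cos c₁ * c₁ := by
      nlinarith [hbs, hc₁pos]
    rw [hkey] at h1
    have hcpos := hcos₁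
    nlinarith [h1]
  rw [hlamval, gt_iff_lt, div_lt_div_iff₀ (by positivity) (by positivity)]
  nlinarith [hfin, sq_nonneg c₁, hR, hσ]
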